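/- There exists an infinite Sidon set S ⊆ ℕ such that limsup_{n→∞} S(n)/√n ≥ 1/√2, where S(n) = #{s ∈ S : s ≤ n}. -/

import Mathlib

open Filter Finset
open scoped Classical

/-- Number of ordered pairs (a,a') with a,a' ∈ A and a+a' = n. -/
noncomputable def Rf (A : Set ℕ) (n : ℕ) : ℕ :=
  Nat.card {p : ℕ × ℕ | p.1 ∈ A ∧ p.2 ∈ A ∧ p.1 + p.2 = n}

/-- Rf extended to ℤ by 0 on negatives. -/
noncomputable def Rz (A : Set ℕ) (k : ℤ) : ℕ :=
  if 0 ≤ k then Rf A k.toNat else 0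

/-- Counting function A(n) = #{a ∈ A : a ≤ n}. -/
noncomputable def cnt (A : Set ℕ) (n : ℕ) : ℕ :=
  Nat.card {a : ℕ | a ∈ A ∧ a ≤ n}

/-- Characteristic function of A, extended by 0 to negative integers. -/
noncomputable def chi (A : Set ℕ) (k : ℤ) : ℤ :=
  if 0 ≤ k ∧ k.toNat ∈ A then 1 else 0

/-- B(A, λ, n) = #{m ≤ n : ∑_{i=0}^d λ_i χ_A(m-i) ≠ 0}. -/
noncomputable def Bf (A : Set ℕ) (lam : ℕ → ℤ) (d : ℕ) (n : ℕ) : ℕ :=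
  Nat.card {m : ℕ | m ≤ n ∧ ∑ i ∈ Finset.range (d+1), lam i * chi A ((m : ℤ) - i) ≠ 0}


def SidonF (T : Finset ℕ) : Prop :=
  ∀ a ∈ T, ∀ b ∈ T, ∀ c ∈ T, ∀ d ∈ T, a + b = c + d → (a = c ∧ b = d) ∨ (a = d ∧ b = c)


lemma ruzsa (p : ℕ) (hp : p.Prime) :
    ∃ a : ℕ → ℕ, (∀ i, i < p - 1 → a i < p * (p - 1)) ∧
      ∀ i j k l, i < p - 1 → j < p - 1 → k < p - 1 → l < p - 1 →
        a i + a j = a k + a l → (i = k ∧ j = l) ∨ (i = l ∧ j = k) := by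
  haveI : Fact p.Prime := ⟨hp⟩
  obtain ⟨g, hg⟩ := IsCyclic.exists_generator (α := (ZMod p)ˣ)
  have horder : orderOf g = p - 1 := by
    rw [orderOf_eq_card_of_forall_mem_zpowers hg, Nat.card_eq_fintype_card, ZMod.card_units]
  have hco : Nat.Coprime (p - 1) p := by
    have : ¬ p ∣ (p - 1) := Nat.not_dvd_of_pos_of_lt (by have := hp.two_le; omega) (by have := hp.two_le; omega)
    exact ((Nat.Prime.coprime_iff_not_dvd hp).mpr this).symm
  have hp1 : p - 1 ≠ 0 := by have := hp.two_le; omega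
  set u : ℕ → ZMod p := fun t => ((g ^ t : (ZMod p)ˣ) : ZMod p) with hu
  set a : ℕ → ℕ := fun i => (Nat.chineseRemainder hco i (u i).val : ℕ) with ha
  have hmod1 : ∀ i, a i ≡ i [MOD p - 1] := fun i => (Nat.chineseRemainder hco i (u i).val).2.1
  have hmodp : ∀ i, (a i : ZMod p) = u i := by
    intro i
    have h2 : a i ≡ (u i).val [MOD p] := (Nat.chineseRemainder hco i (u i).val).2.2
    calc (a i : ZMod p) = ((u i).val : ZMod p) := (ZMod.natCast_eq_natCast_iff _ _ _).mpr h2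
    _ = u i := ZMod.natCast_val _ |>.trans (ZMod.cast_id _ _)
  refine ⟨a, fun i _ => by
    have h := Nat.chineseRemainder_lt_mul hco i (u i).val hp1 hp.pos.ne'
    calc a i < (p - 1) * p := h
    _ = p * (p - 1) := Nat.mul_comm _ _, ?_⟩
  intro i j k l hi hj hk hl hsum
  -- mod p - 1 : i + j ≡ k + l
  have e1 : (i : ZMod (p-1)) + j = (k : ZMod (p-1)) + l := by
    have : ((a i + a j : ℕ) : ZMod (p-1)) = ((a k + a l : ℕ) : ZMod (p-1)) := by rw [hsum]
    push_cast at this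
    rwa [(ZMod.natCast_eq_natCast_iff _ _ _).mpr (hmod1 i),
      (ZMod.natCast_eq_natCast_iff _ _ _).mpr (hmod1 j),
      (ZMod.natCast_eq_natCast_iff _ _ _).mpr (hmod1 k),
      (ZMod.natCast_eq_natCast_iff _ _ _).mpr (hmod1 l)] at this
  have e1' : i + j ≡ k + l [MOD p - 1] := by
    have := (ZMod.natCast_eq_natCast_iff (i+j) (k+l) (p-1)).mp (by push_cast; exact e1)
    exact this
  have hpowsum : g ^ (i + j) = g ^ (k + l) := by
    rw [pow_eq_pow_iff_modEq, horder]; exact e1'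
  have hprod : u i * u j = u k * u l := by
    have : ((g ^ (i+j) : (ZMod p)ˣ) : ZMod p) = ((g ^ (k+l) : (ZMod p)ˣ) : ZMod p) := by
      rw [hpowsum]
    simpa [hu, pow_add] using this
  have hsump : u i + u j = u k + u l := by
    have : ((a i + a j : ℕ) : ZMod p) = ((a k + a l : ℕ) : ZMod p) := by rw [hsum]
    push_cast at this
    rwa [hmodp i, hmodp j, hmodp k, hmodp l] at this
  have key : (u k - u i) * (u k - u j) = 0 := by linear_combination hprod - (u k) * hsump
  have hinj : ∀ s t, s < p - 1 → t < p - 1 → u s = u t → s = t := by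
    intro s t hs ht hst
    have : g ^ s = g ^ t := Units.ext hst
    rw [pow_eq_pow_iff_modEq, horder] at this
    have := this
    unfold Nat.ModEq at this
    rwa [Nat.mod_eq_of_lt hs, Nat.mod_eq_of_lt ht] at this
  rcases mul_eq_zero.mp key with h | h
  · have hik : u k = u i := sub_eq_zero.mp h
    left
    have hik' : i = k := (hinj k i hk hi hik).symm
    rw [← hik] at hsump
    exact ⟨hik', hinj j l hj hl (add_left_cancel hsump)⟩
  · have hjk : u k = u j := sub_eq_zero.mp h
    right
    have hjk' : j = k := (hinj k j hk hj hjk).symm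
    rw [← hjk, add_comm (u i) (u k)] at hsump
    exact ⟨hinj i l hi hl (add_left_cancel hsump), hjk'⟩

lemma glue (k : ℕ) (T : Finset ℕ) (M : ℕ) (hS : SidonF T) (hB : ∀ e ∈ T, e ≤ M) :
    ∃ y : Finset ℕ × ℕ, (SidonF y.1 ∧ ∀ e ∈ y.1, e ≤ y.2) ∧ T ⊆ y.1 ∧ M < y.2 ∧
      ∃ p B : ℕ, 1 ≤ B ∧ (k + 2) * B ≤ p ∧ p - B ≤ y.1.card ∧ y.2 = 2 * p * p := by
  obtain ⟨p, hpge, hp⟩ := Nat.exists_infinite_primes ((k + 2) * (M + 2))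
  have hp2 : 2 ≤ p := hp.two_le
  have hp2M : 2 * M + 4 ≤ p := le_trans (by nlinarith) hpge
  obtain ⟨a, habd, hasid⟩ := ruzsa p hp
  set m := p * (p - 1) with hm_def
  have hmp : p ≤ m := Nat.le_mul_of_pos_right p (by omega)
  have hm : 2 * M + 4 ≤ m := le_trans hp2M hmp
  have hpp : m + p = p * p := by
    obtain ⟨q, rfl⟩ := Nat.exists_eq_add_of_le hp2
    show (2 + q) * (2 + q - 1) + (2 + q) = (2 + q) * (2 + q)
    have h : 2 + q - 1 = q + 1 := by omega
    rw [h]; ring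
  set A : Finset ℕ := (Finset.range (p - 1)).image a with hA_def
  have hAmem : ∀ x ∈ A, ∃ i, i < p - 1 ∧ a i = x := by
    intro x hx
    obtain ⟨i, hi, rfl⟩ := Finset.mem_image.mp hx
    exact ⟨i, Finset.mem_range.mp hi, rfl⟩
  have hAlt : ∀ x ∈ A, x < m := by
    intro x hx; obtain ⟨i, hi, rfl⟩ := hAmem x hx; exact habd i hi
  have hASidon : ∀ w ∈ A, ∀ x ∈ A, ∀ y ∈ A, ∀ z ∈ A,
      w + x = y + z → (w = y ∧ x = z) ∨ (w = z ∧ x = y) := by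
    intro w hw x hx y hy z hz hsum
    obtain ⟨i, hi, rfl⟩ := hAmem w hw
    obtain ⟨j, hj, rfl⟩ := hAmem x hx
    obtain ⟨s, hs, rfl⟩ := hAmem y hy
    obtain ⟨t, ht, rfl⟩ := hAmem z hz
    rcases hasid i j s t hi hj hs ht hsum with ⟨h1, h2⟩ | ⟨h1, h2⟩
    · exact Or.inl ⟨by rw [h1], by rw [h2]⟩
    · exact Or.inr ⟨by rw [h1], by rw [h2]⟩
  have hAcard : A.card = p - 1 := by
    rw [hA_def, Finset.card_image_of_injOn, Finset.card_range]
    intro i hi j hj hij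
    rcases hasid i i j j (Finset.mem_range.mp hi) (Finset.mem_range.mp hi)
      (Finset.mem_range.mp hj) (Finset.mem_range.mp hj) (by rw [hij]) with ⟨h, _⟩ | ⟨h, _⟩
    · exact h
    · exact h
  -- prune small gaps
  set Bad : Finset ℕ := A.filter (fun x => ∃ y, y ∈ A ∧ y < x ∧ x ≤ y + M) with hBad_def
  set A' : Finset ℕ := A \ Bad with hA'_def
  have hA'A : A' ⊆ A := Finset.sdiff_subset
  have hgap : ∀ x ∈ A', ∀ y ∈ A', y < x → y + M < x := by
    intro x hx y hy hyx
    by_contra hcon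
    have : x ∈ Bad := Finset.mem_filter.mpr ⟨hA'A hx, y, hA'A hy, hyx, by omega⟩
    exact (Finset.mem_sdiff.mp hx).2 this
  classical
  have hBadcard : Bad.card ≤ M := by
    have : Bad.card ≤ (Finset.Icc 1 M).card := by
      apply Finset.card_le_card_of_injOn
        (fun x => x - (if h : ∃ y, y ∈ A ∧ y < x ∧ x ≤ y + M then h.choose else 0))
      · intro x hx
        have hx' := Finset.mem_filter.mp hx
        show x - (if h : ∃ y, y ∈ A ∧ y < x ∧ x ≤ y + M then h.choose else 0) ∈ Finset.Icc 1 M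
        rw [dif_pos hx'.2]
        have hspec := hx'.2.choose_spec
        simp only [Finset.mem_Icc]
        omega
      · intro x₁ hx₁ x₂ hx₂ heq
        have h1 := Finset.mem_filter.mp hx₁
        have h2 := Finset.mem_filter.mp hx₂
        have heq' : x₁ - (if h : ∃ y, y ∈ A ∧ y < x₁ ∧ x₁ ≤ y + M then h.choose else 0)
            = x₂ - (if h : ∃ y, y ∈ A ∧ y < x₂ ∧ x₂ ≤ y + M then h.choose else 0) := heq
        rw [dif_pos h1.2, dif_pos h2.2] at heq'
        have hs1 := h1.2.choose_spec
        have hs2 := h2.2.choose_spec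
        have hcross : x₁ + h2.2.choose = x₂ + h1.2.choose := by omega
        rcases hASidon x₁ h1.1 h2.2.choose hs2.1 x₂ h2.1 h1.2.choose hs1.1 hcross with
          ⟨h, _⟩ | ⟨h, _⟩
        · exact h
        · omega
    simpa using this
  have hA'card : p - 1 - M ≤ A'.card := by
    have hsd : A'.card = A.card - Bad.card := Finset.card_sdiff_of_subset (Finset.filter_subset _ _)
    omega
  set c : ℕ := m + M + 1 with hc_def
  refine ⟨(T ∪ A'.image (fun x => c + x), 2 * p * p), ⟨?_, ?_⟩, Finset.subset_union_left, ?_, ?_⟩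
  · -- Sidon
    intro α hα β hβ γ hγ δ hδ hsum
    have getm : ∀ e, e ∈ T ∪ A'.image (fun x => c + x) →
        (e ∈ T ∧ e ≤ M) ∨ ∃ x, x ∈ A' ∧ x < m ∧ e = c + x := by
      intro e he
      rcases Finset.mem_union.mp he with h | h
      · exact Or.inl ⟨h, hB e h⟩
      · obtain ⟨x, hx, rfl⟩ := Finset.mem_image.mp h
        exact Or.inr ⟨x, hx, hAlt x (hA'A hx), rfl⟩
    rcases getm α hα with ⟨hαT, hαM⟩ | ⟨x, hxA, hxm, rfl⟩ <;>
      rcases getm β hβ with ⟨hβT, hβM⟩ | ⟨y, hyA, hym, rfl⟩ <;>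
        rcases getm γ hγ with ⟨hγT, hγM⟩ | ⟨z, hzA, hzm, rfl⟩ <;>
          rcases getm δ hδ with ⟨hδT, hδM⟩ | ⟨w, hwA, hwm, rfl⟩
    -- oooo
    · exact hS α hαT β hβT γ hγT δ hδT hsum
    -- ooon
    · omega
    -- oono
    · omega
    -- oonn
    · omega
    -- onoo
    · omega
    -- onon : β = c+y, δ = c+w
    · rcases Nat.lt_trichotomy y w with h | h | h
      · have := hgap w hwA y hyA h; omega
      · subst h; left; omega
      · have := hgap y hyA w hwA h; omega
    -- onno : β = c+y, γ = c+z
    · rcases Nat.lt_trichotomy y z with h | h | h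
      · have := hgap z hzA y hyA h; omega
      · subst h; right; omega
      · have := hgap y hyA z hzA h; omega
    -- onnn
    · omega
    -- nooo
    · omega
    -- noon : α = c+x, δ = c+w
    · rcases Nat.lt_trichotomy x w with h | h | h
      · have := hgap w hwA x hxA h; omega
      · subst h; right; omega
      · have := hgap x hxA w hwA h; omega
    -- nono : α = c+x, γ = c+z
    · rcases Nat.lt_trichotomy x z with h | h | h
      · have := hgap z hzA x hxA h; omega
      · subst h; left; omega
      · have := hgap x hxA z hzA h; omega
    -- nonn
    · omega
    -- nnoo
    · omega
    -- nnon
    · omega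
    -- nnno
    · omega
    -- nnnn
    · have hxy : x + y = z + w := by omega
      rcases hASidon x (hA'A hxA) y (hA'A hyA) z (hA'A hzA) w (hA'A hwA) hxy with
        ⟨h1, h2⟩ | ⟨h1, h2⟩
      · left; omega
      · right; omega
  · -- bound
    intro e he
    rcases Finset.mem_union.mp he with h | h
    · have := hB e h; nlinarith
    · obtain ⟨x, hx, rfl⟩ := Finset.mem_image.mp h
      have := hAlt x (hA'A hx)
      have h1 : c + x < 2 * m + M + 1 := by omega
      have h2 : 2 * m + M + 1 ≤ 2 * p * p := by
        have := hpp
        have h3 : 2 * p * p = 2 * (p * p) := by ring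
        omega
      omega
  · -- M < M'
    show M < 2 * p * p
    have h3 : 2 * p * p = 2 * (p * p) := by ring
    omega
  · -- cardinality witness
    refine ⟨p, M + 2, by omega, hpge, ?_, rfl⟩
    have h1 : A'.card ≤ (A'.image (fun x => c + x)).card := by
      rw [Finset.card_image_of_injective _ (fun u v huv => by omega)]
    have h2 : (A'.image (fun x => c + x)).card ≤ (T ∪ A'.image (fun x => c + x)).card :=
      Finset.card_le_card Finset.subset_union_right
    simp only
    omega

noncomputable def sq19 : ℕ → {x : Finset ℕ × ℕ // SidonF x.1 ∧ ∀ e ∈ x.1, e ≤ x.2} :=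
  fun n => Nat.rec ⟨(∅, 0), by simp [SidonF]⟩
    (fun k prev =>
      ⟨(glue k prev.1.1 prev.1.2 prev.2.1 prev.2.2).choose,
       (glue k prev.1.1 prev.1.2 prev.2.1 prev.2.2).choose_spec.1⟩) n

lemma sq19succ (k : ℕ) :
    (sq19 k).1.1 ⊆ (sq19 (k+1)).1.1 ∧ (sq19 k).1.2 < (sq19 (k+1)).1.2 ∧
      ∃ p B : ℕ, 1 ≤ B ∧ (k + 2) * B ≤ p ∧ p - B ≤ (sq19 (k+1)).1.1.card ∧
        (sq19 (k+1)).1.2 = 2 * p * p := by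
  have h := (glue k (sq19 k).1.1 (sq19 k).1.2 (sq19 k).2.1 (sq19 k).2.2).choose_spec
  exact ⟨h.2.1, h.2.2.1, h.2.2.2⟩

lemma sq19mono : ∀ {j k : ℕ}, j ≤ k → (sq19 j).1.1 ⊆ (sq19 k).1.1 := by
  intro j k hjk
  induction k with
  | zero => simp_all
  | succ k ih =>
    rcases Nat.lt_or_ge j (k+1) with h | h
    · exact (ih (by omega)).trans (sq19succ k).1
    · have : j = k + 1 := by omega
      subst this; exact subset_rfl

lemma sq19Mge (k : ℕ) : k ≤ (sq19 k).1.2 := by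
  induction k with
  | zero => simp
  | succ k ih => have := (sq19succ k).2.1; omega


theorem stmt19 :
    ∃ S : Set ℕ, S.Infinite ∧ (∀ n, Rf S n ≤ 2) ∧
      limsup (fun n : ℕ => (((cnt S n : ℝ) / Real.sqrt n : ℝ) : EReal)) atTop
        ≥ ((1 / Real.sqrt 2 : ℝ) : EReal) := by
  set S : Set ℕ := ⋃ k, ((sq19 k).1.1 : Set ℕ) with hS_def
  have hmemS : ∀ x, x ∈ S ↔ ∃ k, x ∈ (sq19 k).1.1 := by
    intro x; simp [hS_def]
  -- S is a Sidon set
  have hSidon : ∀ a ∈ S, ∀ b ∈ S, ∀ c ∈ S, ∀ d ∈ S,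
      a + b = c + d → (a = c ∧ b = d) ∨ (a = d ∧ b = c) := by
    intro a ha b hb c hc d hd hsum
    obtain ⟨ka, hka⟩ := (hmemS a).mp ha
    obtain ⟨kb, hkb⟩ := (hmemS b).mp hb
    obtain ⟨kc, hkc⟩ := (hmemS c).mp hc
    obtain ⟨kd, hkd⟩ := (hmemS d).mp hd
    set K := max (max ka kb) (max kc kd) with hK
    exact (sq19 K).2.1 a (sq19mono (le_max_of_le_left (le_max_left _ _)) hka)
      b (sq19mono (le_max_of_le_left (le_max_right _ _)) hkb)
      c (sq19mono (le_max_of_le_right (le_max_left _ _)) hkc)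
      d (sq19mono (le_max_of_le_right (le_max_right _ _)) hkd) hsum
  -- counting lower bound
  have hcnt : ∀ k, (sq19 k).1.1.card ≤ cnt S ((sq19 k).1.2) := by
    intro k
    have hsub : ((sq19 k).1.1 : Set ℕ) ⊆ {a : ℕ | a ∈ S ∧ a ≤ (sq19 k).1.2} := by
      intro x hx
      have hx' : x ∈ (sq19 k).1.1 := hx
      exact ⟨(hmemS x).mpr ⟨k, hx'⟩, (sq19 k).2.2 x hx'⟩
    have hfin : {a : ℕ | a ∈ S ∧ a ≤ (sq19 k).1.2}.Finite :=
      (Set.finite_Iic ((sq19 k).1.2)).subset (fun x hx => hx.2)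
    calc (sq19 k).1.1.card = ((sq19 k).1.1 : Set ℕ).ncard := (Set.ncard_coe_finset _).symm
    _ ≤ {a : ℕ | a ∈ S ∧ a ≤ (sq19 k).1.2}.ncard := Set.ncard_le_ncard hsub hfin
    _ = cnt S ((sq19 k).1.2) := (Nat.card_coe_set_eq _).symm
  refine ⟨S, ?_, ?_, ?_⟩
  · -- infinite
    intro hfin
    have hbound : ∀ k, (sq19 k).1.1.card ≤ hfin.toFinset.card := by
      intro k
      apply Finset.card_le_card
      intro x hx
      exact hfin.mem_toFinset.mpr ((hmemS x).mpr ⟨k, hx⟩)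
    obtain ⟨_, _, hsucc⟩ := sq19succ (hfin.toFinset.card)
    obtain ⟨p, B, hB1, hpB, hcard, _⟩ := hsucc
    set C := hfin.toFinset.card with hC
    have h7 : C + 1 ≤ (C + 1) * B := Nat.le_mul_of_pos_right _ (by omega)
    have h8 : (C + 2) * B = (C + 1) * B + B := by ring
    have := hbound (C + 1)
    omega
  · -- Rf ≤ 2
    intro n
    set P : Set (ℕ × ℕ) := {q : ℕ × ℕ | q.1 ∈ S ∧ q.2 ∈ S ∧ q.1 + q.2 = n} with hP_def
    rcases Set.eq_empty_or_nonempty P with h | ⟨⟨a, b⟩, hab⟩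
    · rw [Rf, show {p : ℕ × ℕ | p.1 ∈ S ∧ p.2 ∈ S ∧ p.1 + p.2 = n} = P from rfl, h]
      simp
    · have hsub : P ⊆ {(a, b), (b, a)} := by
        rintro ⟨x, y⟩ hxy
        rcases hSidon x hxy.1 y hxy.2.1 a hab.1 b hab.2.1 (by
          have := hxy.2.2; have := hab.2.2; omega) with ⟨h1, h2⟩ | ⟨h1, h2⟩
        · left; simp [h1, h2]
        · right; simp [h1, h2]
      calc Rf S n = P.ncard := Nat.card_coe_set_eq _
      _ ≤ ({(a, b), (b, a)} : Set (ℕ × ℕ)).ncard :=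
          Set.ncard_le_ncard hsub ((Set.finite_singleton _).insert _)
      _ ≤ 2 := by
          have := Set.ncard_insert_le ((a, b) : ℕ × ℕ) ({(b, a)} : Set (ℕ × ℕ))
          simpa [Set.ncard_singleton] using this
  · -- limsup
    have hfreq : ∀ b : ℝ, b < 1 / Real.sqrt 2 →
        ((b : EReal) ≤ limsup (fun n : ℕ => (((cnt S n : ℝ) / Real.sqrt n : ℝ) : EReal)) atTop) := by
      intro b hb
      refine le_limsup_of_frequently_le ?_ (by isBoundedDefault)
      rw [frequently_atTop]
      intro N
      -- choose k large enough
      have hs2 : (0:ℝ) < Real.sqrt 2 := Real.sqrt_pos.mpr (by norm_num)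
      obtain ⟨k0, hk0⟩ := exists_nat_gt (1 / ((1 / Real.sqrt 2 - b) * Real.sqrt 2))
      set k := max k0 N with hk_def
      refine ⟨(sq19 (k+1)).1.2, le_trans (le_trans (le_max_right k0 N) ?_) (sq19Mge (k+1)), ?_⟩
      · omega
      · obtain ⟨_, _, p, B, hB1, hpB, hcard, hM⟩ := sq19succ k
        have hBlep : B ≤ p := le_trans (Nat.le_mul_of_pos_left _ (by omega)) hpB
        have hppos : 0 < p := by omega
        have hp0 : (0:ℝ) < p := by exact_mod_cast hppos
        set ε : ℝ := 1 / Real.sqrt 2 - b with hε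
        have hεpos : 0 < ε := by rw [hε]; linarith
        have hsq : Real.sqrt 2 * Real.sqrt 2 = 2 := Real.mul_self_sqrt (by norm_num)
        have h0 : (1:ℝ) / Real.sqrt 2 * Real.sqrt 2 = 1 := div_mul_cancel₀ 1 (ne_of_gt hs2)
        have h1 : ε * Real.sqrt 2 = 1 - b * Real.sqrt 2 := by rw [hε]; linear_combination h0
        have hεs2 : 0 < ε * Real.sqrt 2 := by positivity
        have hk0' : 1 < ((k:ℝ) + 2) * (ε * Real.sqrt 2) := by
          have hkk : (k0:ℝ) ≤ (k:ℝ) := Nat.cast_le.mpr (le_max_left _ _)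
          rw [div_lt_iff₀ hεs2] at hk0
          nlinarith
        have hBp : (B:ℝ) * ((k:ℝ) + 2) ≤ (p:ℝ) := by
          have : ((k + 2) * B : ℕ) ≤ (p : ℕ) := hpB
          have h2 : (((k + 2) * B : ℕ) : ℝ) ≤ ((p : ℕ) : ℝ) := Nat.cast_le.mpr this
          push_cast at h2
          linarith
        have hB0 : (0:ℝ) ≤ B := Nat.cast_nonneg _
        have key : b * Real.sqrt 2 * (p:ℝ) ≤ (p:ℝ) - (B:ℝ) := by
          nlinarith [mul_le_mul_of_nonneg_right hBp (le_of_lt hεs2),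
            mul_le_mul_of_nonneg_left (le_of_lt hk0') hB0]
        -- counting
        have hnat : p - B ≤ cnt S ((sq19 (k+1)).1.2) := le_trans hcard (hcnt (k+1))
        have hCge : (p:ℝ) - (B:ℝ) ≤ (cnt S ((sq19 (k+1)).1.2) : ℝ) := by
          have h2 : ((p - B : ℕ) : ℝ) ≤ ((cnt S ((sq19 (k+1)).1.2) : ℕ) : ℝ) := Nat.cast_le.mpr hnat
          rwa [Nat.cast_sub hBlep] at h2
        have hsqrtn : Real.sqrt ((sq19 (k+1)).1.2 : ℕ) = Real.sqrt 2 * (p:ℝ) := by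
          rw [hM]
          push_cast
          rw [show (2:ℝ) * (p:ℝ) * (p:ℝ) = 2 * ((p:ℝ) * (p:ℝ)) by ring,
            Real.sqrt_mul (by norm_num : (0:ℝ) ≤ 2),
            Real.sqrt_mul_self (Nat.cast_nonneg p)]
        rw [EReal.coe_le_coe_iff, hsqrtn]
        have hden : (0:ℝ) < Real.sqrt 2 * (p:ℝ) := by positivity
        rw [le_div_iff₀ hden]
        calc b * (Real.sqrt 2 * (p:ℝ)) = b * Real.sqrt 2 * (p:ℝ) := by ring
        _ ≤ (p:ℝ) - (B:ℝ) := key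
        _ ≤ _ := hCge
    by_contra hcon
    obtain ⟨r, hr1, hr2⟩ := EReal.exists_between_coe_real (not_le.mp hcon)
    exact absurd (hfreq r (EReal.coe_lt_coe_iff.mp hr2)) (not_le.mpr hr1)
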